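/- A feasible flow u ∈ ℱ is implementable if and only if u is an optimal solution of the linear program: minimize ∑_{(i,p)∈𝒫} τ_{i,p}(u)·x_{i,p} over x ∈ ℱ subject to ∑_{(i,p)∈𝒫} g_{i,p,j}(u)·x_{i,p} ≤ G_j(u) for all j ∈ J. -/

import Mathlib

open Finset

section Carath

variable {V : Type*} [AddCommGroup V] [Module ℝ V] {ι : Type*} [DecidableEq ι]

/-- Reduction step: a nontrivial positive relation lets us drop one index. -/
lemma cone_reduce (v : ι → V) (t : Finset ι) (b : V) (c G : ι → ℝ)
    (hc : ∀ i, 0 ≤ c i) (hb : ∑ i ∈ t, c i • v i = b)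
    (hG : ∑ i ∈ t, G i • v i = 0) (i₁ : ι) (hi₁ : i₁ ∈ t) (hGi₁ : 0 < G i₁) :
    ∃ i₀ ∈ t, ∃ c' : ι → ℝ, (∀ i, 0 ≤ c' i) ∧ ∑ i ∈ t.erase i₀, c' i • v i = b := by
  classical
  obtain ⟨i₀, hi₀mem, hi₀min⟩ :=
    (t.filter fun i => 0 < G i).exists_min_image (fun i => c i / G i)
      ⟨i₁, by simpa using ⟨hi₁, hGi₁⟩⟩
  rw [mem_filter] at hi₀mem
  obtain ⟨hi₀t, hGi₀⟩ := hi₀mem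
  set r := c i₀ / G i₀ with hr
  have hr0 : 0 ≤ r := div_nonneg (hc i₀) hGi₀.le
  refine ⟨i₀, hi₀t, fun i => if i ∈ t then c i - r * G i else 0, ?_, ?_⟩
  · intro i
    show 0 ≤ if i ∈ t then c i - r * G i else 0
    by_cases hit : i ∈ t
    · simp only [hit, if_true, sub_nonneg]
      by_cases hGi : 0 < G i
      · have := hi₀min i (mem_filter.mpr ⟨hit, hGi⟩)
        calc r * G i ≤ (c i / G i) * G i := by
              exact mul_le_mul_of_nonneg_right this hGi.le
          _ = c i := div_mul_cancel₀ _ hGi.ne'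
      · push_neg at hGi
        have : r * G i ≤ 0 := mul_nonpos_of_nonneg_of_nonpos hr0 hGi
        linarith [hc i]
    · simp [hit]
  · show ∑ i ∈ t.erase i₀, (if i ∈ t then c i - r * G i else 0) • v i = b
    have key : ∑ i ∈ t, (if i ∈ t then c i - r * G i else 0) • v i = b := by
      rw [Finset.sum_congr rfl (fun i hi => by rw [if_pos hi])]
      have : ∑ i ∈ t, (c i - r * G i) • v i
          = ∑ i ∈ t, c i • v i - r • ∑ i ∈ t, G i • v i := by
        rw [Finset.smul_sum, ← Finset.sum_sub_distrib]
        exact Finset.sum_congr rfl fun i _ => by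
          rw [sub_smul, smul_smul]
      rw [this, hG, smul_zero, sub_zero, hb]
    have hzero : (if i₀ ∈ t then c i₀ - r * G i₀ else 0) • v i₀ = 0 := by
      rw [if_pos hi₀t, hr, div_mul_cancel₀ _ hGi₀.ne', sub_self, zero_smul]
    rw [← key, ← Finset.add_sum_erase _ _ hi₀t, hzero, zero_add]

/-- Carathéodory for cones. -/
lemma cone_caratheodory (v : ι → V) (t : Finset ι) (b : V) (c : ι → ℝ)
    (hc : ∀ i, 0 ≤ c i) (hb : ∑ i ∈ t, c i • v i = b) :
    ∃ s ⊆ t, LinearIndependent ℝ (fun i : s => v i) ∧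
      ∃ c' : ι → ℝ, (∀ i, 0 ≤ c' i) ∧ ∑ i ∈ s, c' i • v i = b := by
  classical
  induction t using Finset.strongInduction generalizing c with
  | _ t IH =>
    by_cases hli : LinearIndependent ℝ (fun i : t => v i)
    · exact ⟨t, Finset.Subset.refl t, hli, c, hc, hb⟩
    · obtain ⟨g, hgsum, ⟨i₁, hgi₁⟩⟩ := Fintype.not_linearIndependent_iff.mp hli
      set G : ι → ℝ := fun i => if h : i ∈ t then g ⟨i, h⟩ else 0 with hGdef
      have hGsum : ∑ i ∈ t, G i • v i = 0 := by
        rw [← Finset.sum_attach t (fun i => G i • v i)]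
        rw [← hgsum]
        exact Finset.sum_congr rfl fun i _ => by simp [hGdef, i.2]
      have hGi₁ : G (i₁ : ι) ≠ 0 := by simpa [hGdef, i₁.2] using hgi₁
      have step : ∃ i₀ ∈ t, ∃ c' : ι → ℝ, (∀ i, 0 ≤ c' i) ∧
          ∑ i ∈ t.erase i₀, c' i • v i = b := by
        rcases lt_or_gt_of_ne hGi₁ with h | h
        · refine cone_reduce v t b c (fun i => -G i) hc hb ?_ i₁ i₁.2 (by exact neg_pos.mpr h)
          rw [← neg_zero, ← hGsum, ← Finset.sum_neg_distrib]
          exact Finset.sum_congr rfl fun i _ => by simp [neg_smul]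
        · exact cone_reduce v t b c G hc hb hGsum i₁ i₁.2 h
      obtain ⟨i₀, hi₀, c', hc', hb'⟩ := step
      obtain ⟨s, hs, hsli, res⟩ := IH (t.erase i₀) (Finset.erase_ssubset hi₀) c' hc' hb'
      exact ⟨s, hs.trans (Finset.erase_subset _ _), hsli, res⟩

end Carath

section Farkas

open scoped RealInnerProductSpace

variable {H : Type*} [NormedAddCommGroup H] [InnerProductSpace ℝ H]
  [FiniteDimensional ℝ H] {ι : Type*} [Fintype ι]

lemma cone_closed_of_li (v : ι → H) (hv : LinearIndependent ℝ v) :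
    IsClosed {b : H | ∃ c : ι → ℝ, (∀ i, 0 ≤ c i) ∧ ∑ i, c i • v i = b} := by
  let L : (ι → ℝ) →ₗ[ℝ] H :=
    { toFun := fun c => ∑ i, c i • v i
      map_add' := fun a b => by
        simp [add_smul, Finset.sum_add_distrib]
      map_smul' := fun r a => by
        simp [Finset.smul_sum, smul_smul] }
  have hker : LinearMap.ker L = ⊥ := by
    rw [LinearMap.ker_eq_bot']
    intro c hc
    funext i
    exact (Fintype.linearIndependent_iff.mp hv c hc) i
  have hemb := LinearMap.isClosedEmbedding_of_injective (f := L) hker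
  have himg : {b : H | ∃ c : ι → ℝ, (∀ i, 0 ≤ c i) ∧ ∑ i, c i • v i = b}
      = L '' {c : ι → ℝ | ∀ i, 0 ≤ c i} := by
    ext b
    constructor
    · rintro ⟨c, hc, rfl⟩; exact ⟨c, hc, rfl⟩
    · rintro ⟨c, hc, rfl⟩; exact ⟨c, hc, rfl⟩
  rw [himg]
  refine hemb.isClosedMap _ ?_
  have : {c : ι → ℝ | ∀ i, 0 ≤ c i} = ⋂ i, (fun c : ι → ℝ => c i) ⁻¹' Set.Ici 0 := by
    ext c; simp [Set.mem_iInter]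
  rw [this]
  exact isClosed_iInter fun i => isClosed_Ici.preimage (continuous_apply i)

lemma cone_closed (v : ι → H) :
    IsClosed {b : H | ∃ c : ι → ℝ, (∀ i, 0 ≤ c i) ∧ ∑ i, c i • v i = b} := by
  classical
  have hdecomp : {b : H | ∃ c : ι → ℝ, (∀ i, 0 ≤ c i) ∧ ∑ i, c i • v i = b}
      = ⋃ s : {s : Finset ι // LinearIndependent ℝ (fun i : s => v i)},
          {b : H | ∃ c : ↥s.1 → ℝ, (∀ i, 0 ≤ c i) ∧ ∑ i, c i • v (i : ι) = b} := by
    ext b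
    simp only [Set.mem_iUnion, Set.mem_setOf_eq]
    constructor
    · rintro ⟨c, hc, rfl⟩
      obtain ⟨s, _, hsli, c', hc', hb'⟩ :=
        cone_caratheodory v Finset.univ _ c hc rfl
      refine ⟨⟨s, hsli⟩, fun i => c' (i : ι), fun i => hc' (i : ι), ?_⟩
      show ∑ i : {x // x ∈ s}, c' (i : ι) • v (i : ι) = _
      rw [← hb', ← Finset.sum_attach s (fun i => c' i • v i)]
      rfl
    · rintro ⟨⟨s, hsli⟩, c, hc, rfl⟩
      show ∃ c' : ι → ℝ, (∀ i, 0 ≤ c' i) ∧ ∑ i, c' i • v i = ∑ i : {x // x ∈ s}, c i • v (i : ι)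
      refine ⟨fun i => if h : i ∈ s then c ⟨i, h⟩ else 0, ?_, ?_⟩
      · intro i
        by_cases h : i ∈ s
        · simpa [h] using hc ⟨i, h⟩
        · simp [h]
      · rw [← Finset.sum_subset (Finset.subset_univ s)
          (by intro i _ hi; simp [hi])]
        rw [← Finset.sum_attach s (fun i => (if h : i ∈ s then c ⟨i, h⟩ else 0) • v i)]
        exact Finset.sum_congr rfl fun i _ => by simp [i.2]
  rw [hdecomp]
  exact isClosed_iUnion_of_finite fun s => cone_closed_of_li _ s.2

/-- Farkas' lemma: if `b` is not in the cone generated by the `v i`,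
there is a separating vector `w`. -/
lemma farkas (v : ι → H) (b : H)
    (h : ¬ ∃ c : ι → ℝ, (∀ i, 0 ≤ c i) ∧ ∑ i, c i • v i = b) :
    ∃ w : H, (∀ i, 0 ≤ ⟪v i, w⟫) ∧ ⟪b, w⟫ < 0 := by
  classical
  haveI : CompleteSpace H := FiniteDimensional.complete ℝ H
  let K : ConvexCone ℝ H :=
    { carrier := {b : H | ∃ c : ι → ℝ, (∀ i, 0 ≤ c i) ∧ ∑ i, c i • v i = b}
      smul_mem' := by
        rintro r hr x ⟨c, hc, rfl⟩
        exact ⟨fun i => r * c i, fun i => mul_nonneg hr.le (hc i),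
          by rw [Finset.smul_sum]; exact Finset.sum_congr rfl fun i _ => by simp [smul_smul]⟩
      add_mem' := by
        rintro x ⟨c, hc, rfl⟩ y ⟨c', hc', rfl⟩
        exact ⟨fun i => c i + c' i, fun i => add_nonneg (hc i) (hc' i),
          by rw [← Finset.sum_add_distrib]; exact Finset.sum_congr rfl fun i _ => by simp [add_smul]⟩ }
  have hne : (K : Set H).Nonempty := ⟨0, ⟨fun _ => 0, fun i => le_refl 0, by simp⟩⟩
  have hcl : IsClosed (K : Set H) := cone_closed v
  have hbK : b ∉ K := h
  let C : ProperCone ℝ H :=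
    { carrier := (K : Set H)
      add_mem' := fun ha hb => K.add_mem ha hb
      zero_mem' := ⟨fun _ => 0, fun i => le_refl 0, by simp⟩
      smul_mem' := by
        rintro r x ⟨c, hc, rfl⟩
        exact ⟨fun i => (r : ℝ) * c i, fun i => mul_nonneg r.2 (hc i),
          by rw [Finset.smul_sum]; exact Finset.sum_congr rfl fun i _ => by show ((r : ℝ) * c i) • v i = r • c i • v i; rw [mul_smul]; rfl⟩
      isClosed' := hcl }
  obtain ⟨w, hw1, hw2⟩ := C.hyperplane_separation' (x₀ := b) hbK
  rw [real_inner_comm] at hw2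
  refine ⟨w, fun i => ?_, by rwa [real_inner_comm] at hw2⟩
  refine hw1 (v i) ⟨fun k => if k = i then 1 else 0, fun k => by positivity, ?_⟩
  simp

/-- Coordinates of a finite linear combination in Euclidean space. -/
lemma euc_sum_apply {T : Type*} [Fintype T] (f : ι → EuclideanSpace ℝ T) (c : ι → ℝ) (t : T) :
    (∑ k, c k • f k) t = ∑ k, c k * f k t := by
  induction (Finset.univ : Finset ι) using Finset.cons_induction with
  | empty => rfl
  | cons a s ha ih => rw [Finset.sum_cons, Finset.sum_cons, ← ih]; rfl

end Farkas

/-- Rearranging a "flow shift" sum. -/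
lemma shift_sum {Q : Type*} [Fintype Q] (wa : Q → Q → ℝ) (f : Q → ℝ) :
    ∑ r, f r * ((∑ p, wa p r) - ∑ q, wa r q) = ∑ p, ∑ q, (f q - f p) * wa p q := by
  have h1 : ∑ r, f r * ∑ p, wa p r = ∑ p, ∑ q, f q * wa p q :=
    (Finset.sum_congr rfl fun r _ => Finset.mul_sum _ _ _).trans Finset.sum_comm
  have h2 : ∑ r, f r * ∑ q, wa r q = ∑ p, ∑ q, f p * wa p q :=
    Finset.sum_congr rfl fun r _ => Finset.mul_sum _ _ _
  calc ∑ r, f r * ((∑ p, wa p r) - ∑ q, wa r q)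
      = (∑ r, f r * ∑ p, wa p r) - ∑ r, f r * ∑ q, wa r q := by
        rw [← Finset.sum_sub_distrib]
        exact Finset.sum_congr rfl fun r _ => mul_sub _ _ _
    _ = (∑ p, ∑ q, f q * wa p q) - ∑ p, ∑ q, f p * wa p q := by rw [h1, h2]
    _ = ∑ p, ∑ q, (f q - f p) * wa p q := by
        rw [← Finset.sum_sub_distrib]
        refine Finset.sum_congr rfl fun p _ => ?_
        rw [← Finset.sum_sub_distrib]
        exact Finset.sum_congr rfl fun q _ => (sub_mul _ _ _).symm

variable {I : Type*} [Fintype I] {P : I → Type*} [∀ i, Fintype (P i)]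
  {J : Type*} [Fintype J]

/-- A flow is feasible if it is nonnegative and satisfies all demands. -/
def Feasible (d : I → ℝ) (x : ∀ i, P i → ℝ) : Prop :=
  (∀ i p, 0 ≤ x i p) ∧ ∀ i, ∑ p, x i p = d i

/-- Wardrop equilibrium with respect to a cost function. -/
def IsWardrop (d : I → ℝ) (c : (∀ i, P i → ℝ) → ∀ i, P i → ℝ)
    (x : ∀ i, P i → ℝ) : Prop :=
  Feasible d x ∧ ∀ i p, 0 < x i p → ∀ q, c x i p ≤ c x i q

/-- The priced cost `c^λ_{i,p}(x) = τ_{i,p}(x) + ∑_j λ_j · g_{i,p,j}(x)`. -/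
def cPrice (τ : (∀ i, P i → ℝ) → ∀ i, P i → ℝ)
    (g : (∀ i, P i → ℝ) → ∀ i, P i → J → ℝ) (lam : J → ℝ) :
    (∀ i, P i → ℝ) → ∀ i, P i → ℝ :=
  fun x i p => τ x i p + ∑ j, lam j * g x i p j

/-- a feasible flow `u` is implementable iff it is an optimal solution of the LP
minimizing `∑ τ_{i,p}(u)·x_{i,p}` over feasible `x` subject to
`∑ g_{i,p,j}(u)·x_{i,p} ≤ G_j(u)` for all `j`. -/
theorem implementable_iff_lp_optimal
    [∀ i, Nonempty (P i)]
    (d : I → ℝ) (hd : ∀ i, 0 < d i)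
    (τ : (∀ i, P i → ℝ) → ∀ i, P i → ℝ)
    (g : (∀ i, P i → ℝ) → ∀ i, P i → J → ℝ)
    (hg : ∀ x i p j, 0 ≤ g x i p j)
    (u : ∀ i, P i → ℝ) (hu : Feasible d u) :
    (∃ lam : J → ℝ, (∀ j, 0 ≤ lam j) ∧ IsWardrop d (cPrice τ g lam) u) ↔
      (∀ x, Feasible d x →
        (∀ j, ∑ i, ∑ p, g u i p j * x i p ≤ ∑ i, ∑ p, g u i p j * u i p) →
        ∑ i, ∑ p, τ u i p * u i p ≤ ∑ i, ∑ p, τ u i p * x i p) := by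
  classical
  constructor
  · -- forward direction
    rintro ⟨lam, hlam, ⟨huf, hW⟩⟩ x hx hcon
    have expand : ∀ w : ∀ i, P i → ℝ,
        ∑ i, ∑ p, cPrice τ g lam u i p * w i p
          = (∑ i, ∑ p, τ u i p * w i p) + ∑ j, lam j * ∑ i, ∑ p, g u i p j * w i p := by
      intro w
      have h1 : ∀ i, ∑ p, cPrice τ g lam u i p * w i p
          = (∑ p, τ u i p * w i p) + ∑ p, ∑ j, lam j * (g u i p j * w i p) := by
        intro i
        rw [← Finset.sum_add_distrib]
        refine Finset.sum_congr rfl fun p _ => ?_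
        simp [cPrice, add_mul, Finset.sum_mul, mul_assoc]
      calc ∑ i, ∑ p, cPrice τ g lam u i p * w i p
          = ∑ i, ((∑ p, τ u i p * w i p) + ∑ p, ∑ j, lam j * (g u i p j * w i p)) :=
            Finset.sum_congr rfl fun i _ => h1 i
        _ = (∑ i, ∑ p, τ u i p * w i p) + ∑ i, ∑ p, ∑ j, lam j * (g u i p j * w i p) :=
            Finset.sum_add_distrib
        _ = (∑ i, ∑ p, τ u i p * w i p) + ∑ j, lam j * ∑ i, ∑ p, g u i p j * w i p := by
            congr 1
            calc ∑ i, ∑ p, ∑ j, lam j * (g u i p j * w i p)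
                = ∑ i, ∑ j, ∑ p, lam j * (g u i p j * w i p) :=
                  Finset.sum_congr rfl fun i _ => Finset.sum_comm
              _ = ∑ j, ∑ i, ∑ p, lam j * (g u i p j * w i p) := Finset.sum_comm
              _ = ∑ j, lam j * ∑ i, ∑ p, g u i p j * w i p := by
                  refine Finset.sum_congr rfl fun j _ => ?_
                  rw [Finset.mul_sum]
                  exact Finset.sum_congr rfl fun i _ => (Finset.mul_sum _ _ _).symm
    have key : ∀ i, ∑ p, cPrice τ g lam u i p * u i p ≤ ∑ p, cPrice τ g lam u i p * x i p := by
      intro i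
      obtain ⟨p₀, hp₀⟩ : ∃ p₀, 0 < u i p₀ := by
        by_contra hno
        push_neg at hno
        have h0 : ∑ p, u i p = 0 :=
          Finset.sum_eq_zero fun p _ => le_antisymm (hno p) (hu.1 i p)
        rw [hu.2 i] at h0
        exact absurd h0 (hd i).ne'
      have hmin : ∀ q, cPrice τ g lam u i p₀ ≤ cPrice τ g lam u i q := hW i p₀ hp₀
      have h1 : ∑ p, cPrice τ g lam u i p * u i p = cPrice τ g lam u i p₀ * d i := by
        rw [← hu.2 i, Finset.mul_sum]
        refine Finset.sum_congr rfl fun p _ => ?_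
        rcases eq_or_lt_of_le (hu.1 i p) with h | h
        · rw [← h, mul_zero, mul_zero]
        · rw [le_antisymm (hW i p h p₀) (hmin p)]
      have h2 : cPrice τ g lam u i p₀ * d i ≤ ∑ p, cPrice τ g lam u i p * x i p := by
        rw [← hx.2 i, Finset.mul_sum]
        exact Finset.sum_le_sum fun p _ => mul_le_mul_of_nonneg_right (hmin p) (hx.1 i p)
      linarith
    have hsum : ∑ i, ∑ p, cPrice τ g lam u i p * u i p
        ≤ ∑ i, ∑ p, cPrice τ g lam u i p * x i p :=
      Finset.sum_le_sum fun i _ => key i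
    rw [expand u, expand x] at hsum
    have hlamsum : ∑ j, lam j * ∑ i, ∑ p, g u i p j * x i p
        ≤ ∑ j, lam j * ∑ i, ∑ p, g u i p j * u i p :=
      Finset.sum_le_sum fun j _ => mul_le_mul_of_nonneg_left (hcon j) (hlam j)
    linarith
  · -- backward direction
    intro hopt
    by_contra hno
    -- data for Farkas
    set A : (Σ i : I, P i × P i) → J → ℝ :=
      fun t j => if 0 < u t.1 t.2.1 then g u t.1 t.2.1 j - g u t.1 t.2.2 j else 0 with hA
    set bb : EuclideanSpace ℝ (Σ i : I, P i × P i) :=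
      WithLp.toLp 2 (fun t : (Σ i : I, P i × P i) => if 0 < u t.1 t.2.1 then τ u t.1 t.2.2 - τ u t.1 t.2.1 else 0) with hbb
    set vgen : (J ⊕ (Σ i : I, P i × P i)) → EuclideanSpace ℝ (Σ i : I, P i × P i) :=
      Sum.elim (fun j => (WithLp.toLp 2 (fun t => A t j) : EuclideanSpace ℝ (Σ i : I, P i × P i)))
        (fun t => EuclideanSpace.single t 1) with hvgen
    have hnc : ¬ ∃ c : (J ⊕ (Σ i : I, P i × P i)) → ℝ,
        (∀ k, 0 ≤ c k) ∧ ∑ k, c k • vgen k = bb := by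
      rintro ⟨c, hc, hsum⟩
      refine hno ⟨fun j => c (Sum.inl j), fun j => hc _, hu, ?_⟩
      intro i p hp q
      have h1 : (∑ j, c (Sum.inl j) * A ⟨i, (p, q)⟩ j) + c (Sum.inr ⟨i, (p, q)⟩)
          = bb ⟨i, (p, q)⟩ := by
        have e1 : (∑ k, c k • vgen k) (⟨i, (p, q)⟩ : Σ i : I, P i × P i)
            = bb ⟨i, (p, q)⟩ := by rw [hsum]
        rw [euc_sum_apply, Fintype.sum_sum_type] at e1
        simpa [hvgen, EuclideanSpace.single_apply, eq_comm] using e1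
      simp only [hA, hbb, if_pos hp] at h1
      have h2 : ∑ j, c (Sum.inl j) * (g u i p j - g u i q j)
          = (∑ j, c (Sum.inl j) * g u i p j) - ∑ j, c (Sum.inl j) * g u i q j := by
        rw [← Finset.sum_sub_distrib]
        exact Finset.sum_congr rfl fun j _ => mul_sub _ _ _
      have h3 : 0 ≤ c (Sum.inr (⟨i, (p, q)⟩ : Σ i : I, P i × P i)) := hc _
      simp only [cPrice]
      rw [h2] at h1
      linarith
    obtain ⟨w, hw1, hw2⟩ := farkas vgen bb hnc
    -- translate the inner products into coordinate sums
    have hinner : ∀ (y z : EuclideanSpace ℝ (Σ i : I, P i × P i)),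
        (inner ℝ y z : ℝ) = ∑ t, y t * z t := by
      intro y z
      simp [PiLp.inner_apply, RCLike.inner_apply, conj_trivial, mul_comm]
    have hwpos : ∀ t, 0 ≤ w t := by
      intro t
      have := hw1 (Sum.inr t)
      rw [hinner] at this
      simpa [hvgen, EuclideanSpace.single_apply, eq_comm] using this
    have hsig : ∀ F : (Σ i : I, P i × P i) → ℝ,
        ∑ t : Σ i : I, P i × P i, F t = ∑ i, ∑ p, ∑ q, F ⟨i, (p, q)⟩ := by
      intro F
      rw [← Finset.univ_sigma_univ, Finset.sum_sigma]
      exact Finset.sum_congr rfl fun i _ => Fintype.sum_prod_type _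
    -- the masked weights and the shift direction
    set wa : ∀ i : I, P i → P i → ℝ :=
      fun i p q => if 0 < u i p then w ⟨i, (p, q)⟩ else 0 with hwa
    have hwapos : ∀ i p q, 0 ≤ wa i p q := by
      intro i p q
      by_cases h : 0 < u i p
      · simpa [hwa, h] using hwpos ⟨i, (p, q)⟩
      · simp [hwa, h]
    set δ : ∀ i : I, P i → ℝ :=
      fun i r => (∑ p, wa i p r) - ∑ q, wa i r q with hδ
    -- key identities
    have glob : ∀ F : ∀ i, P i → ℝ,
        ∑ i, ∑ r, F i r * δ i r = ∑ i, ∑ p, ∑ q, (F i q - F i p) * wa i p q :=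
      fun F => Finset.sum_congr rfl fun i _ => shift_sum (wa i) (F i)
    have hδ0 : ∀ i, ∑ r, δ i r = 0 := by
      intro i
      show ∑ r, ((∑ p, wa i p r) - ∑ q, wa i r q) = 0
      rw [Finset.sum_sub_distrib, Finset.sum_comm, sub_self]
    have hterm : ∀ (F : ∀ i, P i → ℝ) i (p q : P i),
        (F i q - F i p) * wa i p q
          = (if 0 < u i p then F i q - F i p else 0) * w ⟨i, (p, q)⟩ := by
      intro F i p q
      by_cases h : 0 < u i p <;> simp [hwa, h]
    -- constraint directions
    have hgd : ∀ j, ∑ i, ∑ r, g u i r j * δ i r ≤ 0 := by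
      intro j
      have h0 := hw1 (Sum.inl j)
      rw [hinner, hsig] at h0
      have heq : ∑ i, ∑ r, g u i r j * δ i r
          = -∑ i, ∑ p, ∑ q, vgen (Sum.inl j) ⟨i, (p, q)⟩ * w ⟨i, (p, q)⟩ := by
        rw [glob (fun i r => g u i r j), ← Finset.sum_neg_distrib]
        refine Finset.sum_congr rfl fun i _ => ?_
        rw [← Finset.sum_neg_distrib]
        refine Finset.sum_congr rfl fun p _ => ?_
        rw [← Finset.sum_neg_distrib]
        refine Finset.sum_congr rfl fun q _ => ?_
        by_cases h : 0 < u i p <;> simp [hwa, hvgen, hA, h] <;> ring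
      rw [heq]
      linarith
    have hτd : ∑ i, ∑ r, τ u i r * δ i r < 0 := by
      rw [hinner, hsig] at hw2
      have heq : ∑ i, ∑ r, τ u i r * δ i r
          = ∑ i, ∑ p, ∑ q, bb ⟨i, (p, q)⟩ * w ⟨i, (p, q)⟩ := by
        rw [glob (fun i r => τ u i r)]
        refine Finset.sum_congr rfl fun i _ => ?_
        refine Finset.sum_congr rfl fun p _ => ?_
        refine Finset.sum_congr rfl fun q _ => ?_
        by_cases h : 0 < u i p <;> simp [hwa, hbb, h]
      rw [heq]
      exact hw2
    -- nonemptiness to build ε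
    have hne : Nonempty (Σ i : I, P i) := by
      by_contra h
      haveI : IsEmpty (Σ i : I, P i) := not_nonempty_iff.mp h
      haveI : IsEmpty I := ⟨fun i => this.false ⟨i, Classical.arbitrary (P i)⟩⟩
      rw [Finset.univ_eq_empty, Finset.sum_empty] at hτd
      exact absurd hτd (lt_irrefl 0)
    -- the step size
    set ε : ℝ := Finset.univ.inf' (Finset.univ_nonempty (α := Σ i : I, P i))
      (fun σ : Σ i : I, P i =>
        if 0 < u σ.1 σ.2 ∧ δ σ.1 σ.2 < 0 then u σ.1 σ.2 / (-δ σ.1 σ.2) else 1) with hε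
    have hεpos : 0 < ε := by
      rw [hε, Finset.lt_inf'_iff]
      intro σ _
      by_cases h : 0 < u σ.1 σ.2 ∧ δ σ.1 σ.2 < 0
      · rw [if_pos h]
        exact div_pos h.1 (by linarith [h.2])
      · rw [if_neg h]; exact one_pos
    have hεle : ∀ i (r : P i), 0 < u i r → δ i r < 0 → ε ≤ u i r / (-δ i r) := by
      intro i r h1 h2
      have := Finset.inf'_le (f := fun σ : Σ i : I, P i =>
        if 0 < u σ.1 σ.2 ∧ δ σ.1 σ.2 < 0 then u σ.1 σ.2 / (-δ σ.1 σ.2) else 1)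
        (Finset.mem_univ (⟨i, r⟩ : Σ i : I, P i))
      simp only [if_pos (And.intro h1 h2)] at this
      exact le_trans (le_of_eq hε) this
    -- the improving flow
    set x : ∀ i, P i → ℝ := fun i r => u i r + ε * δ i r with hxdef
    have hδmask : ∀ i (r : P i), ¬ 0 < u i r → 0 ≤ δ i r := by
      intro i r h
      show 0 ≤ (∑ p, wa i p r) - ∑ q, wa i r q
      have h0 : ∑ q, wa i r q = 0 :=
        Finset.sum_eq_zero fun q _ => by simp [hwa, h]
      rw [h0, sub_zero]
      exact Finset.sum_nonneg fun p _ => hwapos i p r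
    have hxfeas : Feasible d x := by
      constructor
      · intro i r
        rcases lt_or_ge (δ i r) 0 with h | h
        · have hur : 0 < u i r := by
            by_contra hc
            exact absurd (hδmask i r hc) (not_le.mpr h)
          have h1 : ε ≤ u i r / (-δ i r) := hεle i r hur h
          have h2 : 0 < -δ i r := by linarith
          rw [le_div_iff₀ h2] at h1
          show 0 ≤ u i r + ε * δ i r
          nlinarith
        · show 0 ≤ u i r + ε * δ i r
          have := hu.1 i r
          nlinarith
      · intro i
        show ∑ r, (u i r + ε * δ i r) = d i
        rw [Finset.sum_add_distrib, hu.2 i, ← Finset.mul_sum, hδ0 i, mul_zero, add_zero]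
    have hexp : ∀ F : ∀ i, P i → ℝ,
        ∑ i, ∑ r, F i r * x i r
          = (∑ i, ∑ r, F i r * u i r) + ε * ∑ i, ∑ r, F i r * δ i r := by
      intro F
      rw [Finset.mul_sum, ← Finset.sum_add_distrib]
      refine Finset.sum_congr rfl fun i _ => ?_
      rw [Finset.mul_sum, ← Finset.sum_add_distrib]
      refine Finset.sum_congr rfl fun r _ => ?_
      show F i r * (u i r + ε * δ i r) = F i r * u i r + ε * (F i r * δ i r)
      ring
    have hcon : ∀ j, ∑ i, ∑ p, g u i p j * x i p ≤ ∑ i, ∑ p, g u i p j * u i p := by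
      intro j
      rw [hexp (fun i p => g u i p j)]
      have := hgd j
      nlinarith
    have hfin := hopt x hxfeas hcon
    rw [hexp (fun i p => τ u i p)] at hfin
    nlinarith
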